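/- Let A be a positive definite n×n complex matrix and X an n×n complex matrix. Set α = ||A + X* A⁻¹ X|| and β = ||A + X A⁻¹ X*||. If α < β, then for every Hermitian matrix C with C ≥ X A⁻¹ X*, the operator norm of the block matrix [[A, X*], [X, C]] is at most ||A + C||. -/

import Mathlib

open scoped Matrix ComplexOrder

/-- The operator norm (largest singular value) of a square complex matrix. -/
noncomputable def opNorm {m : Type*} [Fintype m] [DecidableEq m] (M : Matrix m m ℂ) : ℝ :=
  ‖Matrix.toEuclideanCLM (𝕜 := ℂ) M‖

section aux

variable {m : Type*} [Fintype m] [DecidableEq m]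

lemma psd_nonneg_clm {M : Matrix m m ℂ} (hM : M.PosSemidef) :
    0 ≤ Matrix.toEuclideanCLM (𝕜 := ℂ) M := by
  obtain ⟨B, rfl⟩ : ∃ B : Matrix m m ℂ, M = Bᴴ * B := by
    open scoped MatrixOrder in exact CStarAlgebra.nonneg_iff_eq_star_mul_self.mp hM.nonneg
  rw [map_mul, ← Matrix.star_eq_conjTranspose, map_star]
  exact star_mul_self_nonneg _

lemma nonneg_clm_psd {M : Matrix m m ℂ} (hM : 0 ≤ Matrix.toEuclideanCLM (𝕜 := ℂ) M) :
    M.PosSemidef := by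
  rw [ContinuousLinearMap.nonneg_iff_isPositive] at hM
  have hsymm := (ContinuousLinearMap.isSelfAdjoint_iff_isSymmetric).mp hM.isSelfAdjoint
  refine Matrix.PosSemidef.of_dotProduct_mulVec_nonneg ?_ ?_
  · rw [Matrix.isHermitian_iff_isSymmetric, ← Matrix.coe_toEuclideanCLM_eq_toEuclideanLin]
    exact hsymm
  · intro x
    set y := (WithLp.equiv 2 (m → ℂ)).symm x with hy
    have h1 : (dotProduct (star x) (M *ᵥ x) : ℂ)
        = inner ℂ y (Matrix.toEuclideanCLM (𝕜 := ℂ) M y) := by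
      rw [EuclideanSpace.inner_eq_star_dotProduct, dotProduct_comm]
      simp [hy]
    rw [h1]
    set z : ℂ := inner ℂ y (Matrix.toEuclideanCLM (𝕜 := ℂ) M y) with hz
    have hreal : (starRingEnd ℂ) z = z := by
      rw [hz, inner_conj_symm]
      exact hsymm y y
    rw [Complex.conj_eq_iff_re] at hreal
    rw [← hreal]
    have := hM.inner_nonneg_right y
    simp only [Complex.zero_le_real]
    exact (Complex.nonneg_iff.mp this).1

lemma clm_le_iff {H : Type*} [NormedAddCommGroup H] [InnerProductSpace ℂ H]
    [CompleteSpace H] (f g : H →L[ℂ] H) : f ≤ g ↔ 0 ≤ g - f := by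
  rw [ContinuousLinearMap.le_def, ContinuousLinearMap.nonneg_iff_isPositive]

lemma smul_one_clm_nonneg {H : Type*} [NormedAddCommGroup H] [InnerProductSpace ℂ H]
    [CompleteSpace H] {c : ℝ} (hc : 0 ≤ c) :
    (0 : H →L[ℂ] H) ≤ (c : ℂ) • 1 := by
  have : ((c:ℂ) • 1 : H →L[ℂ] H) = star ((Real.sqrt c : ℂ) • 1) * ((Real.sqrt c : ℂ) • 1) := by
    simp [star_smul, smul_smul, ← Complex.ofReal_mul, Real.mul_self_sqrt hc]
  rw [this]
  exact star_mul_self_nonneg _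

lemma herm_clm_le_smul_one {M : Matrix m m ℂ} (hM : M.IsHermitian) {r : ℝ}
    (hr : ‖Matrix.toEuclideanCLM (𝕜 := ℂ) M‖ ≤ r) :
    Matrix.toEuclideanCLM (𝕜 := ℂ) M ≤ (r : ℂ) • 1 := by
  have hsa : IsSelfAdjoint (Matrix.toEuclideanCLM (𝕜 := ℂ) M) := by
    rw [IsSelfAdjoint, ← map_star]
    exact congrArg _ hM
  have h1 := IsSelfAdjoint.le_algebraMap_norm_self hsa
  have h2 : (algebraMap ℝ _ ‖Matrix.toEuclideanCLM (𝕜 := ℂ) M‖ :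
      EuclideanSpace ℂ m →L[ℂ] EuclideanSpace ℂ m) ≤ (r : ℂ) • 1 := by
    rw [clm_le_iff]
    have : ((r:ℂ) • 1 : EuclideanSpace ℂ m →L[ℂ] EuclideanSpace ℂ m)
        - algebraMap ℝ _ ‖Matrix.toEuclideanCLM (𝕜 := ℂ) M‖
        = ((r - ‖Matrix.toEuclideanCLM (𝕜 := ℂ) M‖ : ℝ) : ℂ) • 1 := by
      rw [Algebra.algebraMap_eq_smul_one,
        ← algebraMap_smul ℂ (‖Matrix.toEuclideanCLM (𝕜 := ℂ) M‖)
          (1 : EuclideanSpace ℂ m →L[ℂ] EuclideanSpace ℂ m),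
        Complex.coe_algebraMap]
      push_cast
      module
    rw [this]
    exact smul_one_clm_nonneg (by linarith [norm_nonneg (Matrix.toEuclideanCLM (𝕜 := ℂ) M)])
  exact h1.trans h2

lemma herm_sub_psd {M : Matrix m m ℂ} (hM : M.IsHermitian) {r : ℝ}
    (hr : opNorm M ≤ r) : ((r : ℂ) • 1 - M).PosSemidef := by
  apply nonneg_clm_psd
  rw [map_sub, map_smul, map_one, ← clm_le_iff]
  exact herm_clm_le_smul_one hM hr

omit [DecidableEq m] in
lemma psd_fromBlocks_diag {M N : Matrix m m ℂ} (hM : M.PosSemidef) (hN : N.PosSemidef) :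
    (Matrix.fromBlocks M 0 0 N).PosSemidef := by
  classical
  obtain ⟨B, rfl⟩ : ∃ B : Matrix m m ℂ, M = Bᴴ * B := by
    open scoped MatrixOrder in exact CStarAlgebra.nonneg_iff_eq_star_mul_self.mp hM.nonneg
  obtain ⟨C, rfl⟩ : ∃ C : Matrix m m ℂ, N = Cᴴ * C := by
    open scoped MatrixOrder in exact CStarAlgebra.nonneg_iff_eq_star_mul_self.mp hN.nonneg
  have h : Matrix.fromBlocks (Bᴴ * B) 0 0 (Cᴴ * C)
      = (Matrix.fromBlocks B 0 0 C)ᴴ * Matrix.fromBlocks B 0 0 C := by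
    rw [Matrix.fromBlocks_conjTranspose, Matrix.fromBlocks_multiply]
    simp
  rw [h]
  exact Matrix.posSemidef_conjTranspose_mul_self _

end aux

set_option maxHeartbeats 2000000 in
theorem stmt_3 {n : ℕ} (A X : Matrix (Fin n) (Fin n) ℂ) (hA : A.PosDef)
    (hαβ : opNorm (A + Xᴴ * A⁻¹ * X) < opNorm (A + X * A⁻¹ * Xᴴ)) :
    ∀ C : Matrix (Fin n) (Fin n) ℂ, C.IsHermitian → (C - X * A⁻¹ * Xᴴ).PosSemidef →
      opNorm (Matrix.fromBlocks A Xᴴ X C) ≤ opNorm (A + C) := by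
  intro C hC hSchur
  have hAinv : (A⁻¹).PosDef := hA.inv
  have hdetA : IsUnit A.det := (Matrix.isUnit_iff_isUnit_det _).mp hA.isUnit
  set r : ℝ := opNorm (A + C) with hrdef
  -- β ≤ r
  have hACps : (A + X * A⁻¹ * Xᴴ).PosSemidef :=
    hA.posSemidef.add (hAinv.posSemidef.mul_mul_conjTranspose_same X)
  have hdiff : ((A + C) - (A + X * A⁻¹ * Xᴴ)).PosSemidef := by
    have h : (A + C) - (A + X * A⁻¹ * Xᴴ) = C - X * A⁻¹ * Xᴴ := by
      abel
    rw [h]; exact hSchur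
  have hβr : opNorm (A + X * A⁻¹ * Xᴴ) ≤ r := by
    refine CStarAlgebra.norm_le_norm_of_nonneg_of_le (psd_nonneg_clm hACps) ?_
    rw [clm_le_iff, ← map_sub]
    exact psd_nonneg_clm hdiff
  have hαr : opNorm (A + Xᴴ * A⁻¹ * X) ≤ r := (hαβ.trans_le hβr).le
  have hrnn : 0 ≤ r := hrdef ▸ norm_nonneg _
  -- blocks
  set P := A + Xᴴ * A⁻¹ * X with hPdef
  set Q := A + C with hQdef
  set H := Matrix.fromBlocks A Xᴴ X C with hHdef
  -- H is PSD via Schur complement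
  haveI : Invertible A := A.invertibleOfIsUnitDet hdetA
  have hH : H.PosSemidef := by
    have h := (Matrix.PosDef.fromBlocks₁₁ Xᴴ C hA).mpr (by simpa using hSchur)
    simpa [hHdef] using h
  -- the key comparison matrix
  have hK : (Matrix.fromBlocks (Xᴴ * A⁻¹ * X) (-Xᴴ) (-X) A).PosSemidef := by
    have hfact : Matrix.fromBlocks (Xᴴ * A⁻¹ * X) (-Xᴴ) (-X) A
        = (Matrix.fromCols X (-A))ᴴ * A⁻¹ * Matrix.fromCols X (-A) := by
      have h1 : Xᴴ * A⁻¹ * A = Xᴴ := by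
        rw [Matrix.mul_assoc, Matrix.nonsing_inv_mul A hdetA, Matrix.mul_one]
      have h2 : A * A⁻¹ = 1 := Matrix.mul_nonsing_inv A hdetA
      rw [Matrix.conjTranspose_fromCols_eq_fromRows_conjTranspose,
        Matrix.fromRows_mul, Matrix.fromRows_mul_fromCols]
      simp [Matrix.mul_neg, Matrix.neg_mul, hA.1.eq, Matrix.conjTranspose_neg, h2,
        ← Matrix.mul_assoc, h1]
    rw [hfact]
    exact hAinv.posSemidef.conjTranspose_mul_mul_same _
  have hDH : (Matrix.fromBlocks P 0 0 Q - H).PosSemidef := by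
    have heq : Matrix.fromBlocks P 0 0 Q - H
        = Matrix.fromBlocks (Xᴴ * A⁻¹ * X) (-Xᴴ) (-X) A := by
      rw [hHdef, hPdef, hQdef]
      ext (i | i) (j | j) <;>
        simp [Matrix.sub_apply, Matrix.add_apply, Matrix.neg_apply]
    rw [heq]; exact hK
  -- fromBlocks P 0 0 Q ≤ r • 1
  have hPH : P.IsHermitian := hA.1.add (Matrix.isHermitian_conjTranspose_mul_mul X hAinv.1)
  have hQH : Q.IsHermitian := hA.1.add hC
  have hD'le : ((r : ℂ) • 1 - Matrix.fromBlocks P 0 0 Q).PosSemidef := by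
    have heq : ((r : ℂ) • 1 - Matrix.fromBlocks P 0 0 Q :
        Matrix (Fin n ⊕ Fin n) (Fin n ⊕ Fin n) ℂ)
        = Matrix.fromBlocks ((r : ℂ) • 1 - P) 0 0 ((r : ℂ) • 1 - Q) := by
      rw [← Matrix.fromBlocks_one, Matrix.fromBlocks_smul]
      ext (i | i) (j | j) <;> simp [Matrix.sub_apply]
    rw [heq]
    exact psd_fromBlocks_diag (herm_sub_psd hPH hαr) (herm_sub_psd hQH le_rfl)
  -- put it together in the CLM C*-algebra
  have h0 : 0 ≤ Matrix.toEuclideanCLM (𝕜 := ℂ) H := psd_nonneg_clm hH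
  have h1 : Matrix.toEuclideanCLM (𝕜 := ℂ) H ≤ (r : ℂ) • 1 := by
    have ha : Matrix.toEuclideanCLM (𝕜 := ℂ) H
        ≤ Matrix.toEuclideanCLM (𝕜 := ℂ) (Matrix.fromBlocks P 0 0 Q) := by
      rw [clm_le_iff, ← map_sub]
      exact psd_nonneg_clm hDH
    have hb : Matrix.toEuclideanCLM (𝕜 := ℂ) (Matrix.fromBlocks P 0 0 Q)
        ≤ (r : ℂ) • 1 := by
      rw [clm_le_iff]
      have := psd_nonneg_clm hD'le
      rwa [map_sub, map_smul, map_one] at this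
    exact ha.trans hb
  have hnorm : ‖Matrix.toEuclideanCLM (𝕜 := ℂ) H‖ ≤ ‖((r : ℂ) • 1 :
      EuclideanSpace ℂ (Fin n ⊕ Fin n) →L[ℂ] EuclideanSpace ℂ (Fin n ⊕ Fin n))‖ :=
    CStarAlgebra.norm_le_norm_of_nonneg_of_le h0 h1
  calc opNorm H = ‖Matrix.toEuclideanCLM (𝕜 := ℂ) H‖ := rfl
    _ ≤ ‖((r : ℂ) • 1 : EuclideanSpace ℂ (Fin n ⊕ Fin n) →L[ℂ]
        EuclideanSpace ℂ (Fin n ⊕ Fin n))‖ := hnorm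
    _ ≤ ‖(r : ℂ)‖ * ‖(1 : EuclideanSpace ℂ (Fin n ⊕ Fin n) →L[ℂ]
        EuclideanSpace ℂ (Fin n ⊕ Fin n))‖ := ContinuousLinearMap.opNorm_smul_le _ _
    _ ≤ r * 1 := by
        refine mul_le_mul ?_ ?_ (norm_nonneg _) hrnn
        · simp [Real.norm_eq_abs, abs_of_nonneg hrnn]
        · rw [ContinuousLinearMap.one_def]; exact ContinuousLinearMap.norm_id_le
    _ = r := mul_one r
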